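/- arXiv:math/9812072 — 2 statements merged into one kernel-verified Lean document; each statement's English description precedes it below -/
import Mathlib

section
/- Fix a natural number r. For every natural number N and every partition λ of N all of whose parts are at most r, there exist a unique pair (μ, ν) such that: μ is a partition with pairwise distinct parts, all parts of μ are at most r; ν is a partition all of whose parts are at most r; and the multiset of parts of λ equals the multiset sum of the parts of μ, the parts of ν, and the parts of ν (i.e., λ = μ joined with two copies of ν). In other words, the map (μ, ν) ↦ λ = ννμ is a bijection from such pairs onto the set of partitions of N with all parts ≤ r. -/
/-- The bijection `(μ, ν) ↦ ννμ` of the paper: every partition `λ` of `N` with all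
parts at most `r` decomposes uniquely as a strict partition `μ` with parts ≤ `r`
together with two copies of a partition `ν` with parts ≤ `r`. -/
theorem partition_unique_decomposition (r N : ℕ) (lam : Nat.Partition N)
    (hlam : ∀ p ∈ lam.parts, p ≤ r) :
    ∃! mn : Multiset ℕ × Multiset ℕ,
      mn.1.Nodup ∧
      (∀ p ∈ mn.1, 0 < p ∧ p ≤ r) ∧
      (∀ p ∈ mn.2, 0 < p ∧ p ≤ r) ∧
      lam.parts = mn.1 + mn.2 + mn.2 := by
  classical
  set s := lam.parts with hs
  set μ : Multiset ℕ := (s.toFinset.filter (fun p => ¬ Even (s.count p))).val with hμ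
  set ν : Multiset ℕ := ∑ p ∈ s.toFinset, Multiset.replicate (s.count p / 2) p with hν
  have hcountμ : ∀ q, μ.count q = s.count q % 2 := by
    intro q
    rw [hμ, Multiset.count_eq_of_nodup (Finset.filter _ _).nodup]
    simp only [Finset.mem_val]
    by_cases hq : q ∈ s.toFinset.filter (fun p => ¬ Even (s.count p))
    · rw [if_pos hq]
      simp only [Finset.mem_filter, Multiset.mem_toFinset, Nat.even_iff] at hq
      omega
    · rw [if_neg hq]
      simp only [Finset.mem_filter, Multiset.mem_toFinset, not_and, not_not, Nat.even_iff] at hq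
      by_cases hq' : q ∈ s
      · have := hq hq'
        omega
      · rw [Multiset.count_eq_zero_of_notMem hq']
  have hcountν : ∀ q, ν.count q = s.count q / 2 := by
    intro q
    rw [hν, Multiset.count_sum']
    by_cases hq : q ∈ s.toFinset
    · rw [Finset.sum_eq_single q]
      · simp
      · intro p _ hpq
        rw [Multiset.count_replicate, if_neg hpq]
      · intro h; exact absurd hq h
    · rw [Finset.sum_eq_zero]
      · rw [Multiset.mem_toFinset] at hq
        rw [Multiset.count_eq_zero_of_notMem hq]
        simp
      · intro p hp
        rw [Multiset.count_replicate, if_neg]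
        rintro rfl; exact hq hp
  have hmemμ : ∀ q ∈ μ, q ∈ s := by
    intro q hq
    have := hcountμ q
    have h1 : μ.count q ≠ 0 := Multiset.count_ne_zero.2 hq
    rw [← Multiset.count_pos]
    omega
  have hmemν : ∀ q ∈ ν, q ∈ s := by
    intro q hq
    have := hcountν q
    have h1 : ν.count q ≠ 0 := Multiset.count_ne_zero.2 hq
    rw [← Multiset.count_pos]
    omega
  refine ⟨(μ, ν), ⟨(Finset.filter _ _).nodup, ?_, ?_, ?_⟩, ?_⟩
  · intro p hp
    exact ⟨lam.parts_pos (hmemμ p hp), hlam p (hmemμ p hp)⟩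
  · intro p hp
    exact ⟨lam.parts_pos (hmemν p hp), hlam p (hmemν p hp)⟩
  · ext q
    simp only [Multiset.count_add, hcountμ q, hcountν q]
    omega
  · rintro ⟨μ', ν'⟩ ⟨hnd, _, _, heq⟩
    have hcnt : ∀ q, s.count q = μ'.count q + ν'.count q + ν'.count q := by
      intro q
      have : s.count q = (μ' + ν' + ν').count q := by rw [heq]
      simpa using this
    have hle : ∀ q, μ'.count q ≤ 1 := Multiset.nodup_iff_count_le_one.1 hnd
    have hμ' : μ' = μ := by
      ext q
      have := hcnt q; have := hle q; have := hcountμ q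
      omega
    have hν' : ν' = ν := by
      ext q
      have := hcnt q; have := hle q; have := hcountν q
      have := hcountμ q
      have h2 : μ'.count q = μ.count q := by rw [hμ']
      omega
    simp [hμ', hν']
end

section
/- Let n, e, f, r, m be integers with 0 ≤ m, ⌊m/2⌋ ≤ r < e ≤ f. If δ(r − ⌊m/2⌋) ≥ ε(m), then δ(r) > m, where δ(u) = n − (f−u)(e−u) and ε : ℕ → ℕ is defined by ε(0) = 1, ε(1) = 2, ε(2k) = 0 and ε(2k+1) = 1 for every integer k ≥ 1. -/
/-- The arithmetic step in the Conclusion of the Lefschetz theorem for degeneracy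
loci: if `0 ≤ m`, `⌊m/2⌋ ≤ r < e ≤ f` and `δ(r − ⌊m/2⌋) ≥ ε(m)`, then `δ(r) > m`,
where `δ(u) = n − (f−u)(e−u)`. -/
theorem delta_conclusion (n e f r m : ℤ)
    (hm : 0 ≤ m) (hmr : m / 2 ≤ r) (hre : r < e) (hef : e ≤ f)
    (hδ : n - (f - (r - m / 2)) * (e - (r - m / 2)) ≥
      (if m = 0 then 1 else if m = 1 then 2 else if m % 2 = 0 then 0 else 1)) :
    n - (f - r) * (e - r) > m := by
  set s := m / 2 with hs
  have hs0 : 0 ≤ s := Int.ediv_nonneg hm (by norm_num)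
  have hmod : m % 2 = 0 ∨ m % 2 = 1 := Int.emod_two_eq_zero_or_one m
  have heq : 2 * s + m % 2 = m := by rw [hs]; omega
  have he1 : 1 ≤ e - r := by omega
  have hf1 : 1 ≤ f - r := by omega
  by_cases h0 : m = 0
  · simp [h0] at hδ ⊢
    subst h0
    simp [hs] at *
    nlinarith
  by_cases h1 : m = 1
  · subst h1
    simp at hδ
    simp [hs] at *
    nlinarith
  rcases hmod with h2 | h2
  · rw [if_neg h0, if_neg h1, if_pos h2] at hδ
    have hsm : m = 2 * s := by omega
    have hs1 : 1 ≤ s := by omega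
    nlinarith [mul_le_mul hef (le_refl (e-r)) (by omega) (by omega)]
  · rw [if_neg h0, if_neg h1, if_neg (by omega)] at hδ
    have hsm : m = 2 * s + 1 := by omega
    have hs1 : 1 ≤ s := by omega
    nlinarith
end
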